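/- Fix a finite set S ⊆ ℝ and an integer i ≥ 1. Let N be the FS^op-module over ℚ with N(E) the free ℚ-vector space on {v : E → S | v is not identically zero} and pullback N(φ)(w) = w ∘ φ for surjections φ. Then for every nonempty finite type E, the i-fold tensor power N(E)^{⊗ i} is spanned by the set of elements of the form (N(φ)(y₁)) ⊗ ⋯ ⊗ (N(φ)(y_i)), where φ : E → F ranges over surjections onto nonempty finite types F with |F| ≤ |S|^i and y₁, …, y_i ∈ N(F). In other words, the i-th pointwise tensor power of N is finitely generated in degrees ≤ |S|^i. -/

import Mathlib

open CategoryTheory Opposite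

/-- An object of the category `FS`: a nonempty finite type. -/
structure FSObj : Type 1 where
  carrier : Type
  [fintype : Fintype carrier]
  [nonempty : Nonempty carrier]

attribute [instance] FSObj.fintype FSObj.nonempty

/-- The category `FS` of nonempty finite types with surjections. -/
instance : Category FSObj where
  Hom A B := {f : A.carrier → B.carrier // Function.Surjective f}
  id A := ⟨id, Function.surjective_id⟩
  comp f g := ⟨g.1 ∘ f.1, g.2.comp f.2⟩

/-- An `FSᵒᵖ`-module `N` over `ℚ` is generated in degrees `≤ m` if for every
object `E` of `FS`, the vector space `N(E)` is spanned by the images of the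
pullback maps `N(φ) : N(F) → N(E)` over all surjections `φ : E → F` with `|F| ≤ m`. -/
def GeneratedInDegreesLE (N : FSObjᵒᵖ ⥤ ModuleCat ℚ) (m : ℕ) : Prop :=
  ∀ E : FSObj, Submodule.span ℚ
    {x : N.obj (op E) | ∃ (F : FSObj) (φ : E ⟶ F) (y : N.obj (op F)),
      Fintype.card F.carrier ≤ m ∧ x = N.map φ.op y} = ⊤

/-- The type of functions `E → S` that are not identically zero
(for `S` a finite set of reals). -/
def NzFun (S : Finset ℝ) (E : FSObj) : Type :=
  {v : E.carrier → S // ∃ e, (v e : ℝ) ≠ 0}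

/-- Pullback of a not-identically-zero function along a surjection is
not identically zero. -/
def NzFun.pullback (S : Finset ℝ) {E F : FSObj} (φ : E ⟶ F) (w : NzFun S F) :
    NzFun S E :=
  ⟨w.1 ∘ φ.1, by
    obtain ⟨f, hf⟩ := w.2
    obtain ⟨e, he⟩ := φ.2 f
    exact ⟨e, by simp only [Function.comp_apply, he]; exact hf⟩⟩

/-- The `FSᵒᵖ`-module sending a nonempty finite type `E` to the free `ℚ`-vector
space on the set of not-identically-zero functions `v : E → S`, with pullback along
a surjection `φ : E → F` sending a basis element `w` to `w ∘ φ`. -/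
noncomputable def resMod (S : Finset ℝ) : FSObjᵒᵖ ⥤ ModuleCat ℚ where
  obj E := ModuleCat.of ℚ (NzFun S (unop E) →₀ ℚ)
  map {E E'} φ := ModuleCat.ofHom (Finsupp.lmapDomain ℚ ℚ (NzFun.pullback S φ.unop))
  map_id E := by
    show ModuleCat.ofHom (Finsupp.lmapDomain ℚ ℚ (NzFun.pullback S (𝟙 E : E ⟶ E).unop)) = _
    have h : NzFun.pullback S (𝟙 E : E ⟶ E).unop = id := by
      funext w; exact Subtype.ext rfl
    rw [h, Finsupp.lmapDomain_id]; rfl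
  map_comp {E E' E''} φ φ' := by
    show ModuleCat.ofHom (Finsupp.lmapDomain ℚ ℚ (NzFun.pullback S (φ ≫ φ').unop)) = _
    have h : NzFun.pullback S (φ ≫ φ').unop =
        NzFun.pullback S φ'.unop ∘ NzFun.pullback S φ.unop := by
      funext w; exact Subtype.ext rfl
    rw [h, Finsupp.lmapDomain_comp]; rfl

open scoped TensorProduct in
/-- the `i`-th pointwise tensor power of the module `N` with `N(E)`
free on the nonzero elements of `S^E` is generated in degrees `≤ |S|^i`
(each tensor power being moreover finite-dimensional). -/
theorem stmt_9 (S : Finset ℝ) (i : ℕ) (hi : 1 ≤ i) (E : FSObj) :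
    Submodule.span ℚ
      {z : ⨂[ℚ] (_ : Fin i), (resMod S).obj (op E) |
        ∃ (F : FSObj) (φ : E ⟶ F) (y : Fin i → (resMod S).obj (op F)),
          Fintype.card F.carrier ≤ S.card ^ i ∧
          z = PiTensorProduct.tprod ℚ (fun j => (resMod S).map φ.op (y j))} = ⊤ := by
  classical
  rw [eq_top_iff, ← PiTensorProduct.span_tprod_eq_top, Submodule.span_le]
  rintro z ⟨f, rfl⟩
  have hexp : ∀ g : NzFun S E →₀ ℚ, g = ∑ w ∈ g.support, g w • Finsupp.single w (1:ℚ) := by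
    intro g
    conv_lhs => rw [← Finsupp.sum_single g]
    rw [Finsupp.sum]
    exact Finset.sum_congr rfl fun w _ => (Finsupp.smul_single_one w (g w)).symm
  set f' : Fin i → (NzFun S E →₀ ℚ) := f with hf'
  have hf : f' = fun j => ∑ w ∈ (f' j).support, (f' j) w • Finsupp.single w (1:ℚ) :=
    funext fun j => hexp (f' j)
  rw [hf]
  erw [MultilinearMap.map_sum_finset]
  apply Submodule.sum_mem
  intro r hr
  erw [MultilinearMap.map_smul_univ]
  apply Submodule.smul_mem
  apply Submodule.subset_span
  -- construct the factorization
  set Φ : E.carrier → (Fin i → S) := fun e j => (r j).1 e with hΦ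
  haveI : Fintype (Set.range Φ) := Fintype.ofFinite _
  haveI : Nonempty (Set.range Φ) := (Set.range_nonempty Φ).to_subtype
  set F : FSObj := ⟨Set.range Φ⟩ with hF
  set φ : E ⟶ F := ⟨Set.rangeFactorization Φ, Set.rangeFactorization_surjective⟩ with hφ
  have hy : ∀ j : Fin i, ∃ p : F.carrier, ((p.1 j : ℝ)) ≠ 0 := by
    intro j
    obtain ⟨e, he⟩ := (r j).2
    exact ⟨⟨Φ e, Set.mem_range_self e⟩, he⟩
  refine ⟨F, φ, fun j => Finsupp.single ⟨fun p => p.1 j, hy j⟩ 1, ?_, ?_⟩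
  · calc Fintype.card F.carrier ≤ Fintype.card (Fin i → S) :=
          Fintype.card_le_of_injective Subtype.val Subtype.val_injective
      _ = S.card ^ i := by rw [Fintype.card_fun, Fintype.card_coe, Fintype.card_fin]
  · congr 1
    funext j
    show Finsupp.single (r j) (1:ℚ) =
      Finsupp.mapDomain (NzFun.pullback S φ) (Finsupp.single ⟨fun p => p.1 j, hy j⟩ 1)
    erw [Finsupp.mapDomain_single]
    congr 1
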